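/- The curve C₆ = {F₆ = 0} ⊂ P² passes through each of the points p₁ = [-2:1:1], p₂ = [2:1:1], p₃ = [-1:2:1], p₄ = [1:2:1], p₅ = [3:2i:1], and has multiplicity exactly 2 at p₁, p₂, p₃, p₄ and multiplicity 1 at p₅. -/
import Mathlib

open MvPolynomial
set_option maxHeartbeats 2000000

/-- F₆ in the affine chart z = 1, over K = ℚ(i) ⊆ ℂ. -/
noncomputable def f₆C : MvPolynomial (Fin 2) ℂ :=
  let x : MvPolynomial (Fin 2) ℂ := X 0
  let y : MvPolynomial (Fin 2) ℂ := X 1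
  4*x^6 - 273*x^4*y^2 - 258*x^2*y^4 - 481*y^6 + 720*x^4*y + 1740*x^2*y^3 +
  4020*y^5 - 520*x^4 - 3190*x^2*y^2 - 12670*y^4 + 1200*x^2*y +
  17700*y^3 + 900*x^2 - 9225*y^2

/-- Recentering of an affine plane curve at the point (a,b). -/
noncomputable def shiftAt (a b : ℂ) (f : MvPolynomial (Fin 2) ℂ) : MvPolynomial (Fin 2) ℂ :=
  aeval ![X 0 + C a, X 1 + C b] f

/-- Multiplicity of the affine curve f = 0 at the origin is exactly m. -/
def multIs (f : MvPolynomial (Fin 2) ℂ) (m : ℕ) : Prop :=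
  (∀ k < m, homogeneousComponent k f = 0) ∧ homogeneousComponent m f ≠ 0

lemma hCI : (C Complex.I : MvPolynomial (Fin 2) ℂ) * C Complex.I = -1 := by
  rw [← map_mul, Complex.I_mul_I, map_neg, map_one]

lemma hc_term (k i j : ℕ) (c : ℂ) :
    homogeneousComponent k (C c * X 0 ^ i * X 1 ^ j : MvPolynomial (Fin 2) ℂ) =
      if k = i + j then C c * X 0 ^ i * X 1 ^ j else 0 := by
  apply homogeneousComponent_of_mem
  rw [mem_homogeneousSubmodule]
  simpa using ((isHomogeneous_C _ c).mul ((isHomogeneous_X _ 0).pow i)).mul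
    ((isHomogeneous_X _ 1).pow j)


lemma hc_add (k : ℕ) (p q : MvPolynomial (Fin 2) ℂ) :
    homogeneousComponent k (p + q) = homogeneousComponent k p + homogeneousComponent k q :=
  map_add _ _ _

lemma multIs_of (g : MvPolynomial (Fin 2) ℂ) (m : ℕ)
    (h0 : ∀ k < m, homogeneousComponent k g = 0)
    (h1 : eval ![(1:ℂ), 0] (homogeneousComponent m g) ≠ 0) : multIs g m :=
  ⟨h0, fun h => h1 (by rw [h, map_zero])⟩

lemma hsh1 : shiftAt (-2) 1 f₆C =
      C (-1600 : ℂ) * X 0 ^ 0 * X 1 ^ 2 +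
      C (-1600 : ℂ) * X 0 ^ 1 * X 1 ^ 1 +
      C (-400 : ℂ) * X 0 ^ 2 * X 1 ^ 0 +
      C (432 : ℂ) * X 0 ^ 0 * X 1 ^ 3 +
      C (6808 : ℂ) * X 0 ^ 1 * X 1 ^ 2 +
      C (3184 : ℂ) * X 0 ^ 2 * X 1 ^ 1 +
      C (-56 : ℂ) * X 0 ^ 3 * X 1 ^ 0 +
      C (-817 : ℂ) * X 0 ^ 0 * X 1 ^ 4 +
      C (-2832 : ℂ) * X 0 ^ 1 * X 1 ^ 3 +
      C (-6070 : ℂ) * X 0 ^ 2 * X 1 ^ 2 +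
      C (-1392 : ℂ) * X 0 ^ 3 * X 1 ^ 1 +
      C (167 : ℂ) * X 0 ^ 4 * X 1 ^ 0 +
      C (1134 : ℂ) * X 0 ^ 0 * X 1 ^ 5 +
      C (1032 : ℂ) * X 0 ^ 1 * X 1 ^ 4 +
      C (708 : ℂ) * X 0 ^ 2 * X 1 ^ 3 +
      C (2184 : ℂ) * X 0 ^ 3 * X 1 ^ 2 +
      C (174 : ℂ) * X 0 ^ 4 * X 1 ^ 1 +
      C (-48 : ℂ) * X 0 ^ 5 * X 1 ^ 0 +
      C (-481 : ℂ) * X 0 ^ 0 * X 1 ^ 6 +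
      C (-258 : ℂ) * X 0 ^ 2 * X 1 ^ 4 +
      C (-273 : ℂ) * X 0 ^ 4 * X 1 ^ 2 +
      C (4 : ℂ) * X 0 ^ 6 * X 1 ^ 0 := by
  simp only [shiftAt, f₆C, map_add, map_mul, map_sub, map_pow, map_neg, map_one,
    map_ofNat, aeval_X, Matrix.cons_val_zero, Matrix.cons_val_one, Matrix.head_cons, aeval_C]
  ring

lemma hsh2 : shiftAt 2 1 f₆C =
      C (-1600 : ℂ) * X 0 ^ 0 * X 1 ^ 2 +
      C (1600 : ℂ) * X 0 ^ 1 * X 1 ^ 1 +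
      C (-400 : ℂ) * X 0 ^ 2 * X 1 ^ 0 +
      C (432 : ℂ) * X 0 ^ 0 * X 1 ^ 3 +
      C (-6808 : ℂ) * X 0 ^ 1 * X 1 ^ 2 +
      C (3184 : ℂ) * X 0 ^ 2 * X 1 ^ 1 +
      C (56 : ℂ) * X 0 ^ 3 * X 1 ^ 0 +
      C (-817 : ℂ) * X 0 ^ 0 * X 1 ^ 4 +
      C (2832 : ℂ) * X 0 ^ 1 * X 1 ^ 3 +
      C (-6070 : ℂ) * X 0 ^ 2 * X 1 ^ 2 +
      C (1392 : ℂ) * X 0 ^ 3 * X 1 ^ 1 +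
      C (167 : ℂ) * X 0 ^ 4 * X 1 ^ 0 +
      C (1134 : ℂ) * X 0 ^ 0 * X 1 ^ 5 +
      C (-1032 : ℂ) * X 0 ^ 1 * X 1 ^ 4 +
      C (708 : ℂ) * X 0 ^ 2 * X 1 ^ 3 +
      C (-2184 : ℂ) * X 0 ^ 3 * X 1 ^ 2 +
      C (174 : ℂ) * X 0 ^ 4 * X 1 ^ 1 +
      C (48 : ℂ) * X 0 ^ 5 * X 1 ^ 0 +
      C (-481 : ℂ) * X 0 ^ 0 * X 1 ^ 6 +
      C (-258 : ℂ) * X 0 ^ 2 * X 1 ^ 4 +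
      C (-273 : ℂ) * X 0 ^ 4 * X 1 ^ 2 +
      C (4 : ℂ) * X 0 ^ 6 * X 1 ^ 0 := by
  simp only [shiftAt, f₆C, map_add, map_mul, map_sub, map_pow, map_neg, map_one,
    map_ofNat, aeval_X, Matrix.cons_val_zero, Matrix.cons_val_one, Matrix.head_cons, aeval_C]
  ring

lemma hsh3 : shiftAt (-1) 2 f₆C =
      C (-160 : ℂ) * X 0 ^ 0 * X 1 ^ 2 +
      C (-640 : ℂ) * X 0 ^ 1 * X 1 ^ 1 +
      C (-640 : ℂ) * X 0 ^ 2 * X 1 ^ 0 +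
      C (-144 : ℂ) * X 0 ^ 0 * X 1 ^ 3 +
      C (-1024 : ℂ) * X 0 ^ 1 * X 1 ^ 2 +
      C (-1168 : ℂ) * X 0 ^ 2 * X 1 ^ 1 +
      C (608 : ℂ) * X 0 ^ 3 * X 1 ^ 0 +
      C (-1588 : ℂ) * X 0 ^ 0 * X 1 ^ 4 +
      C (648 : ℂ) * X 0 ^ 1 * X 1 ^ 3 +
      C (-580 : ℂ) * X 0 ^ 2 * X 1 ^ 2 +
      C (1488 : ℂ) * X 0 ^ 3 * X 1 ^ 1 +
      C (-112 : ℂ) * X 0 ^ 4 * X 1 ^ 0 +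
      C (-1752 : ℂ) * X 0 ^ 0 * X 1 ^ 5 +
      C (516 : ℂ) * X 0 ^ 1 * X 1 ^ 4 +
      C (-324 : ℂ) * X 0 ^ 2 * X 1 ^ 3 +
      C (1092 : ℂ) * X 0 ^ 3 * X 1 ^ 2 +
      C (-372 : ℂ) * X 0 ^ 4 * X 1 ^ 1 +
      C (-24 : ℂ) * X 0 ^ 5 * X 1 ^ 0 +
      C (-481 : ℂ) * X 0 ^ 0 * X 1 ^ 6 +
      C (-258 : ℂ) * X 0 ^ 2 * X 1 ^ 4 +
      C (-273 : ℂ) * X 0 ^ 4 * X 1 ^ 2 +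
      C (4 : ℂ) * X 0 ^ 6 * X 1 ^ 0 := by
  simp only [shiftAt, f₆C, map_add, map_mul, map_sub, map_pow, map_neg, map_one,
    map_ofNat, aeval_X, Matrix.cons_val_zero, Matrix.cons_val_one, Matrix.head_cons, aeval_C]
  ring

lemma hsh4 : shiftAt 1 2 f₆C =
      C (-160 : ℂ) * X 0 ^ 0 * X 1 ^ 2 +
      C (640 : ℂ) * X 0 ^ 1 * X 1 ^ 1 +
      C (-640 : ℂ) * X 0 ^ 2 * X 1 ^ 0 +
      C (-144 : ℂ) * X 0 ^ 0 * X 1 ^ 3 +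
      C (1024 : ℂ) * X 0 ^ 1 * X 1 ^ 2 +
      C (-1168 : ℂ) * X 0 ^ 2 * X 1 ^ 1 +
      C (-608 : ℂ) * X 0 ^ 3 * X 1 ^ 0 +
      C (-1588 : ℂ) * X 0 ^ 0 * X 1 ^ 4 +
      C (-648 : ℂ) * X 0 ^ 1 * X 1 ^ 3 +
      C (-580 : ℂ) * X 0 ^ 2 * X 1 ^ 2 +
      C (-1488 : ℂ) * X 0 ^ 3 * X 1 ^ 1 +
      C (-112 : ℂ) * X 0 ^ 4 * X 1 ^ 0 +
      C (-1752 : ℂ) * X 0 ^ 0 * X 1 ^ 5 +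
      C (-516 : ℂ) * X 0 ^ 1 * X 1 ^ 4 +
      C (-324 : ℂ) * X 0 ^ 2 * X 1 ^ 3 +
      C (-1092 : ℂ) * X 0 ^ 3 * X 1 ^ 2 +
      C (-372 : ℂ) * X 0 ^ 4 * X 1 ^ 1 +
      C (24 : ℂ) * X 0 ^ 5 * X 1 ^ 0 +
      C (-481 : ℂ) * X 0 ^ 0 * X 1 ^ 6 +
      C (-258 : ℂ) * X 0 ^ 2 * X 1 ^ 4 +
      C (-273 : ℂ) * X 0 ^ 4 * X 1 ^ 2 +
      C (4 : ℂ) * X 0 ^ 6 * X 1 ^ 0 := by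
  simp only [shiftAt, f₆C, map_add, map_mul, map_sub, map_pow, map_neg, map_one,
    map_ofNat, aeval_X, Matrix.cons_val_zero, Matrix.cons_val_one, Matrix.head_cons, aeval_C]
  ring

lemma hsh5 : shiftAt 3 (2 * Complex.I) f₆C =
      C ((-9600 : ℂ) + 147200 * Complex.I) * X 0 ^ 0 * X 1 ^ 1 +
      C ((124800 : ℂ) + 86400 * Complex.I) * X 0 ^ 1 * X 1 ^ 0 +
      C ((184320 : ℂ) + -121440 * Complex.I) * X 0 ^ 0 * X 1 ^ 2 +
      C ((-40320 : ℂ) + -144960 * Complex.I) * X 0 ^ 1 * X 1 ^ 1 +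
      C ((45280 : ℂ) + 66240 * Complex.I) * X 0 ^ 2 * X 1 ^ 0 +
      C ((-127440 : ℂ) + -42976 * Complex.I) * X 0 ^ 0 * X 1 ^ 3 +
      C ((-11472 : ℂ) + 62640 * Complex.I) * X 0 ^ 1 * X 1 ^ 2 +
      C ((19200 : ℂ) + -63472 * Complex.I) * X 0 ^ 2 * X 1 ^ 1 +
      C ((9024 : ℂ) + 17280 * Complex.I) * X 0 ^ 3 * X 1 ^ 0 +
      C ((13868 : ℂ) + 40200 * Complex.I) * X 0 ^ 0 * X 1 ^ 4 +
      C ((10440 : ℂ) + -12384 * Complex.I) * X 0 ^ 1 * X 1 ^ 3 +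
      C ((-11740 : ℂ) + 10440 * Complex.I) * X 0 ^ 2 * X 1 ^ 2 +
      C ((8640 : ℂ) + -13104 * Complex.I) * X 0 ^ 3 * X 1 ^ 1 +
      C ((1112 : ℂ) + 1440 * Complex.I) * X 0 ^ 4 * X 1 ^ 0 +
      C ((4020 : ℂ) + -5772 * Complex.I) * X 0 ^ 0 * X 1 ^ 5 +
      C (-1548 : ℂ) * X 0 ^ 1 * X 1 ^ 4 +
      C ((1740 : ℂ) + -2064 * Complex.I) * X 0 ^ 2 * X 1 ^ 3 +
      C (-3276 : ℂ) * X 0 ^ 3 * X 1 ^ 2 +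
      C ((720 : ℂ) + -1092 * Complex.I) * X 0 ^ 4 * X 1 ^ 1 +
      C (72 : ℂ) * X 0 ^ 5 * X 1 ^ 0 +
      C (-481 : ℂ) * X 0 ^ 0 * X 1 ^ 6 +
      C (-258 : ℂ) * X 0 ^ 2 * X 1 ^ 4 +
      C (-273 : ℂ) * X 0 ^ 4 * X 1 ^ 2 +
      C (4 : ℂ) * X 0 ^ 6 * X 1 ^ 0 := by
  simp only [shiftAt, f₆C, map_add, map_mul, map_sub, map_pow, map_neg, map_one,
    map_ofNat, aeval_X, Matrix.cons_val_zero, Matrix.cons_val_one, Matrix.head_cons, aeval_C]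
  linear_combination (norm := ring1) ((-31104 : MvPolynomial (Fin 2) ℂ) +
      (138240 : MvPolynomial (Fin 2) ℂ) * C Complex.I ^ 1 +
      (78720 : MvPolynomial (Fin 2) ℂ) * X 1 ^ 1 +
      (-169728 : MvPolynomial (Fin 2) ℂ) * X 0 ^ 1 +
      (-209088 : MvPolynomial (Fin 2) ℂ) * C Complex.I ^ 2 +
      (-387392 : MvPolynomial (Fin 2) ℂ) * X 1 ^ 1 * C Complex.I ^ 1 +
      (-244368 : MvPolynomial (Fin 2) ℂ) * X 1 ^ 2 +
      (83520 : MvPolynomial (Fin 2) ℂ) * X 0 ^ 1 * C Complex.I ^ 1 +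
      (125280 : MvPolynomial (Fin 2) ℂ) * X 0 ^ 1 * X 1 ^ 1 +
      (-67600 : MvPolynomial (Fin 2) ℂ) * X 0 ^ 2 +
      (128640 : MvPolynomial (Fin 2) ℂ) * C Complex.I ^ 3 +
      (321600 : MvPolynomial (Fin 2) ℂ) * X 1 ^ 1 * C Complex.I ^ 2 +
      (321600 : MvPolynomial (Fin 2) ℂ) * X 1 ^ 2 * C Complex.I ^ 1 +
      (160800 : MvPolynomial (Fin 2) ℂ) * X 1 ^ 3 +
      (-24768 : MvPolynomial (Fin 2) ℂ) * X 0 ^ 1 * C Complex.I ^ 2 +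
      (-49536 : MvPolynomial (Fin 2) ℂ) * X 0 ^ 1 * X 1 ^ 1 * C Complex.I ^ 1 +
      (-37152 : MvPolynomial (Fin 2) ℂ) * X 0 ^ 1 * X 1 ^ 2 +
      (13920 : MvPolynomial (Fin 2) ℂ) * X 0 ^ 2 * C Complex.I ^ 1 +
      (20880 : MvPolynomial (Fin 2) ℂ) * X 0 ^ 2 * X 1 ^ 1 +
      (-13104 : MvPolynomial (Fin 2) ℂ) * X 0 ^ 3 +
      (-30784 : MvPolynomial (Fin 2) ℂ) * C Complex.I ^ 4 +
      (-92352 : MvPolynomial (Fin 2) ℂ) * X 1 ^ 1 * C Complex.I ^ 3 +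
      (-115440 : MvPolynomial (Fin 2) ℂ) * X 1 ^ 2 * C Complex.I ^ 2 +
      (-76960 : MvPolynomial (Fin 2) ℂ) * X 1 ^ 3 * C Complex.I ^ 1 +
      (-28860 : MvPolynomial (Fin 2) ℂ) * X 1 ^ 4 +
      (-4128 : MvPolynomial (Fin 2) ℂ) * X 0 ^ 2 * C Complex.I ^ 2 +
      (-8256 : MvPolynomial (Fin 2) ℂ) * X 0 ^ 2 * X 1 ^ 1 * C Complex.I ^ 1 +
      (-6192 : MvPolynomial (Fin 2) ℂ) * X 0 ^ 2 * X 1 ^ 2 +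
      (-1092 : MvPolynomial (Fin 2) ℂ) * X 0 ^ 4) * hCI

/-- C₆ passes through p₁ = [-2:1:1], p₂ = [2:1:1], p₃ = [-1:2:1], p₄ = [1:2:1],
p₅ = [3:2i:1], with multiplicity exactly 2 at p₁,…,p₄ and 1 at p₅. -/
theorem stmt16 :
    multIs (shiftAt (-2) 1 f₆C) 2 ∧
    multIs (shiftAt 2 1 f₆C) 2 ∧
    multIs (shiftAt (-1) 2 f₆C) 2 ∧
    multIs (shiftAt 1 2 f₆C) 2 ∧
    multIs (shiftAt 3 (2 * Complex.I) f₆C) 1 := by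
  refine ⟨?_, ?_, ?_, ?_, ?_⟩
  · apply multIs_of
    · intro k hk
      interval_cases k <;>
      · rw [hsh1]
        simp only [hc_add, hc_term]
        norm_num
    · rw [hsh1]
      simp only [hc_add, hc_term]
      norm_num [eval_add, eval_mul, eval_pow, eval_C, eval_X, Matrix.cons_val_zero,
        Matrix.cons_val_one, Matrix.head_cons, Complex.ext_iff]
  · apply multIs_of
    · intro k hk
      interval_cases k <;>
      · rw [hsh2]
        simp only [hc_add, hc_term]
        norm_num
    · rw [hsh2]
      simp only [hc_add, hc_term]
      norm_num [eval_add, eval_mul, eval_pow, eval_C, eval_X, Matrix.cons_val_zero,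
        Matrix.cons_val_one, Matrix.head_cons, Complex.ext_iff]
  · apply multIs_of
    · intro k hk
      interval_cases k <;>
      · rw [hsh3]
        simp only [hc_add, hc_term]
        norm_num
    · rw [hsh3]
      simp only [hc_add, hc_term]
      norm_num [eval_add, eval_mul, eval_pow, eval_C, eval_X, Matrix.cons_val_zero,
        Matrix.cons_val_one, Matrix.head_cons, Complex.ext_iff]
  · apply multIs_of
    · intro k hk
      interval_cases k <;>
      · rw [hsh4]
        simp only [hc_add, hc_term]
        norm_num
    · rw [hsh4]
      simp only [hc_add, hc_term]
      norm_num [eval_add, eval_mul, eval_pow, eval_C, eval_X, Matrix.cons_val_zero,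
        Matrix.cons_val_one, Matrix.head_cons, Complex.ext_iff]
  · apply multIs_of
    · intro k hk
      interval_cases k <;>
      · rw [hsh5]
        simp only [hc_add, hc_term]
        norm_num
    · rw [hsh5]
      simp only [hc_add, hc_term]
      norm_num [eval_add, eval_mul, eval_pow, eval_C, eval_X, Matrix.cons_val_zero,
        Matrix.cons_val_one, Matrix.head_cons, Complex.ext_iff]
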